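/- Let μ, ν_1,…,ν_k be probability distributions on a nonempty finite set Ω. The family {ν_1,…,ν_k} strictly preserves positivity (SPP) with respect to μ if and only if there exist weights q_1,…,q_k with q_i > 0 for every i, Σ q_i = 1, and μ = Σ_{i=1}^k q_i ν_i. -/

import Mathlib

open Finset

/-- The family `ν` strictly preserves positivity (SPP) w.r.t. `μ`: for every
option `u` with `E_μ[u] = 0` and `E_{ν_i}[u] ≥ 0` for every `i`, it follows that
`E_{ν_i}[u] = 0` for every `i`. -/
def SPP {Ω : Type} [Fintype Ω] {k : ℕ} (ν : Fin k → Ω → ℝ) (μ : Ω → ℝ) : Prop :=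
  ∀ u : Ω → ℝ, (∑ ω, μ ω * u ω) = 0 → (∀ i, 0 ≤ ∑ ω, ν i ω * u ω) →
    ∀ i, (∑ ω, ν i ω * u ω) = 0

local notation "⟪" x ", " y "⟫" => @inner ℝ _ _ x y

/-- Stiemke-type lemma: if every vector having nonpositive inner products with
all the `a i` is in fact orthogonal to all of them, then `0` is a strictly
positive combination of the `a i`. -/
lemma stiemke {E : Type} [NormedAddCommGroup E] [InnerProductSpace ℝ E]
    [FiniteDimensional ℝ E] {k : ℕ} (hk : 0 < k) (a : Fin k → E)
    (h : ∀ u : E, (∀ i, ⟪a i, u⟫ ≤ 0) → ∀ i, ⟪a i, u⟫ = 0) :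
    ∃ c : Fin k → ℝ, (∀ i, 0 < c i) ∧ ∑ i, c i • a i = 0 := by
  haveI : Nonempty (Fin k) := ⟨⟨0, hk⟩⟩
  by_cases hall : ∀ i, a i = 0
  · exact ⟨fun _ => 1, fun _ => one_pos, by simp [hall]⟩
  push_neg at hall
  obtain ⟨i₀, hi₀⟩ := hall
  set V : Submodule ℝ E := Submodule.span ℝ (Set.range a) with hV
  have haV : ∀ i, a i ∈ V := fun i => Submodule.subset_span (Set.mem_range_self i)
  -- key consequence of the hypothesis
  have key : ∀ u ∈ V, u ≠ 0 → ∃ i, 0 < ⟪a i, u⟫ := by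
    intro u hu hne
    by_contra hcon
    push_neg at hcon
    have h0 : ∀ i, ⟪a i, u⟫ = 0 := h u hcon
    obtain ⟨d, hd⟩ := (Submodule.mem_span_range_iff_exists_fun ℝ).mp hu
    apply hne
    have huu : ⟪u, u⟫ = (0:ℝ) := by
      rw [← hd, sum_inner]
      refine Finset.sum_eq_zero fun i _ => ?_
      rw [real_inner_smul_left, hd, h0 i, mul_zero]
    exact inner_self_eq_zero.mp huu
  -- the "margin" function
  set m : E → ℝ := fun u => ∑ i, max ⟪a i, u⟫ 0 with hm
  have hmcont : Continuous m := by
    apply continuous_finset_sum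
    intro i _
    exact ((continuous_const.inner continuous_id).max continuous_const)
  -- the sphere intersected with V
  set S : Set E := Metric.sphere (0:E) 1 ∩ V with hS
  have hScompact : IsCompact S := by
    exact (isCompact_sphere (0:E) 1).inter_right (Submodule.closed_of_finiteDimensional V)
  have hSne : S.Nonempty := by
    refine ⟨(‖a i₀‖⁻¹) • a i₀, ?_, V.smul_mem _ (haV i₀)⟩
    simp [norm_smul, norm_ne_zero_iff.mpr hi₀,
      inv_mul_cancel₀ (norm_ne_zero_iff.mpr hi₀)]
  obtain ⟨u₀, hu₀S, hu₀min⟩ := hScompact.exists_isMinOn hSne hmcont.continuousOn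
  set δ : ℝ := m u₀ with hδ
  have hδpos : 0 < δ := by
    obtain ⟨i, hi⟩ := key u₀ hu₀S.2 (by
      intro h0
      have := hu₀S.1
      simp [h0] at this)
    refine Finset.sum_pos' (fun j _ => le_max_right _ _) ⟨i, mem_univ i, ?_⟩
    exact lt_max_of_lt_left hi
  have hδk : 0 < δ / k := div_pos hδpos (Nat.cast_pos.mpr hk)
  -- coercivity bound
  have hbound : ∀ y ∈ V, y ≠ 0 → ∃ i, (δ / k) * ‖y‖ ≤ ⟪a i, y⟫ := by
    intro y hy hyne
    have hny : (0:ℝ) < ‖y‖ := norm_pos_iff.mpr hyne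
    set u : E := ‖y‖⁻¹ • y with hu
    have huS : u ∈ S := by
      constructor
      · simp [hu, norm_smul, abs_of_pos (inv_pos.mpr hny), inv_mul_cancel₀ hny.ne']
      · exact V.smul_mem _ hy
    have hmu : δ ≤ m u := hu₀min huS
    have : ∃ i ∈ Finset.univ (α := Fin k), δ / k ≤ max ⟪a i, u⟫ 0 := by
      apply Finset.exists_le_of_sum_le univ_nonempty
      calc ∑ _i : Fin k, δ / k = k * (δ / k) := by
              rw [Finset.sum_const, card_univ, Fintype.card_fin, nsmul_eq_mul]
        _ = δ := by field_simp
        _ ≤ m u := hmu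
    obtain ⟨i, _, hile⟩ := this
    have hiu : δ / k ≤ ⟪a i, u⟫ := by
      rcases le_max_iff.mp hile with h' | h'
      · exact h'
      · linarith
    refine ⟨i, ?_⟩
    have : ⟪a i, y⟫ = ‖y‖ * ⟪a i, u⟫ := by
      rw [hu, real_inner_smul_right, ← mul_assoc, mul_inv_cancel₀ hny.ne', one_mul]
    rw [this, mul_comm ((δ:ℝ)/k) ‖y‖]
    exact mul_le_mul_of_nonneg_left hiu hny.le
  -- the function to minimize
  set F : E → ℝ := fun y => ∑ i, Real.exp ⟪a i, y⟫ with hF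
  have hFcont : Continuous F := by
    apply continuous_finset_sum
    intro i _
    exact (continuous_const.inner continuous_id).rexp
  have hFlow : ∀ y ∈ V, y ≠ 0 → Real.exp ((δ/k) * ‖y‖) ≤ F y := by
    intro y hy hyne
    obtain ⟨i, hi⟩ := hbound y hy hyne
    calc Real.exp ((δ/k) * ‖y‖) ≤ Real.exp ⟪a i, y⟫ := Real.exp_le_exp.mpr hi
      _ ≤ F y := Finset.single_le_sum (f := fun j => Real.exp ⟪a j, y⟫) (fun j _ => (Real.exp_pos _).le) (mem_univ i)
  set R : ℝ := (k / δ) * (Real.log k + 1) with hR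
  have hk1 : (1:ℝ) ≤ k := by exact_mod_cast hk
  have hRnonneg : 0 ≤ R := by
    apply mul_nonneg (le_of_lt (div_pos (Nat.cast_pos.mpr hk) hδpos))
    have := Real.log_nonneg hk1
    linarith
  have hRbig : (k:ℝ) < Real.exp ((δ/k) * R) := by
    have : (δ/k) * R = Real.log k + 1 := by
      rw [hR]; field_simp
    rw [this]
    calc (k:ℝ) = Real.exp (Real.log k) := (Real.exp_log (by positivity)).symm
      _ < Real.exp (Real.log k + 1) := Real.exp_lt_exp.mpr (by linarith)
  -- minimize over the compact set
  set K : Set E := Metric.closedBall (0:E) R ∩ V with hK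
  have hKcompact : IsCompact K :=
    (isCompact_closedBall (0:E) R).inter_right (Submodule.closed_of_finiteDimensional V)
  have h0K : (0:E) ∈ K := ⟨Metric.mem_closedBall_self hRnonneg, V.zero_mem⟩
  obtain ⟨y, hyK, hymin⟩ := hKcompact.exists_isMinOn ⟨0, h0K⟩ hFcont.continuousOn
  have hF0 : F 0 = k := by simp [hF]
  have hFy : F y ≤ k := by
    have := hymin h0K
    simpa [hF0] using this
  -- y is a global min over V
  have hglobal : ∀ z ∈ V, F y ≤ F z := by
    intro z hz
    by_cases hzK : z ∈ Metric.closedBall (0:E) R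
    · exact hymin ⟨hzK, hz⟩
    · have hzR : R < ‖z‖ := by
        simpa [Metric.mem_closedBall, dist_eq_norm] using hzK
      have hzne : z ≠ 0 := by
        intro h0; rw [h0] at hzR; simp at hzR; linarith
      have : Real.exp ((δ/k) * R) ≤ Real.exp ((δ/k) * ‖z‖) :=
        Real.exp_le_exp.mpr (mul_le_mul_of_nonneg_left hzR.le hδk.le)
      have h2 := hFlow z hz hzne
      linarith
  -- the gradient direction
  set c : Fin k → ℝ := fun i => Real.exp ⟪a i, y⟫ with hc
  set w : E := ∑ i, c i • a i with hw
  have hwV : w ∈ V := Submodule.sum_mem V (fun i _ => V.smul_mem _ (haV i))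
  have hyV : y ∈ V := hyK.2
  -- the one-variable function
  set φ : ℝ → ℝ := fun t => ∑ i, Real.exp (⟪a i, y⟫ + t * ⟪a i, w⟫) with hφ
  have hφF : ∀ t, φ t = F (y + t • w) := by
    intro t
    apply Finset.sum_congr rfl
    intro i _
    rw [inner_add_right, real_inner_smul_right]
  have hφmin : IsLocalMin φ 0 := by
    apply Filter.Eventually.of_forall
    intro t
    rw [hφF t, hφF 0]
    simp only [zero_smul, add_zero]
    exact hglobal _ (V.add_mem hyV (V.smul_mem _ hwV))
  have hderiv : HasDerivAt φ (∑ i, Real.exp (⟪a i, y⟫ + 0 * ⟪a i, w⟫) * ⟪a i, w⟫) 0 := by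
    apply HasDerivAt.fun_sum
    intro i _
    exact (((hasDerivAt_id (0:ℝ)).mul_const ⟪a i, w⟫).const_add ⟪a i, y⟫).exp.congr_deriv
      (by simp only [id_eq, zero_mul, add_zero]; ring)
  have hzero : (∑ i, Real.exp (⟪a i, y⟫ + 0 * ⟪a i, w⟫) * ⟪a i, w⟫) = 0 :=
    hφmin.hasDerivAt_eq_zero hderiv
  have hww : ⟪w, w⟫ = (0:ℝ) := by
    rw [hw, sum_inner]
    simp only [real_inner_smul_left]
    rw [← hzero]
    apply Finset.sum_congr rfl
    intro i _
    rw [hc]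
    simp
    rfl
  have hw0 : w = 0 := inner_self_eq_zero.mp hww
  exact ⟨c, fun i => Real.exp_pos _, by rw [← hw, hw0]⟩

/-- `{ν_1,…,ν_k}` strictly preserves positivity w.r.t. `μ` iff `μ`
is a convex combination of `ν_1,…,ν_k` with all weights strictly positive. -/
theorem stmt_9 {Ω : Type} [Fintype Ω] [Nonempty Ω] {k : ℕ} (hk : 0 < k)
    (μ : Ω → ℝ) (hμ0 : ∀ ω, 0 ≤ μ ω) (hμ1 : (∑ ω, μ ω) = 1)
    (ν : Fin k → Ω → ℝ) (hν : ∀ i, (∀ ω, 0 ≤ ν i ω) ∧ ((∑ ω, ν i ω) = 1)) :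
    SPP ν μ ↔ ∃ q : Fin k → ℝ, (∀ i, 0 < q i) ∧ ((∑ i, q i) = 1) ∧
      (∀ ω, μ ω = ∑ i, q i * ν i ω) := by
  haveI : Nonempty (Fin k) := ⟨⟨0, hk⟩⟩
  constructor
  · -- hard direction
    intro hspp
    set a : Fin k → EuclideanSpace ℝ Ω := fun i => WithLp.toLp 2 (fun ω => ν i ω - μ ω) with ha
    have hinner : ∀ (i : Fin k) (u : EuclideanSpace ℝ Ω),
        ⟪a i, u⟫ = (∑ ω, ν i ω * u ω) - ∑ ω, μ ω * u ω := by
      intro i u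
      rw [PiLp.inner_apply]
      simp only [RCLike.inner_apply, conj_trivial]
      rw [← Finset.sum_sub_distrib]
      apply Finset.sum_congr rfl
      intro ω _
      show u ω * (ν i ω - μ ω) = _
      ring
    have hhyp : ∀ u : EuclideanSpace ℝ Ω, (∀ i, ⟪a i, u⟫ ≤ 0) → ∀ i, ⟪a i, u⟫ = 0 := by
      intro u hu i
      set cst : ℝ := ∑ ω, μ ω * u ω with hcst
      set v : Ω → ℝ := fun ω => cst - u ω with hv
      have hμv : (∑ ω, μ ω * v ω) = 0 := by
        simp only [hv, mul_sub]
        rw [Finset.sum_sub_distrib, ← Finset.sum_mul, hμ1, one_mul, hcst]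
        ring
      have hνv : ∀ j, (∑ ω, ν j ω * v ω) = -⟪a j, u⟫ := by
        intro j
        rw [hinner]
        simp only [hv, mul_sub]
        rw [Finset.sum_sub_distrib, ← Finset.sum_mul, (hν j).2, one_mul, hcst]
        ring
      have := hspp v hμv (fun j => by rw [hνv j]; linarith [hu j])
      have hi := this i
      rw [hνv i] at hi
      linarith
    obtain ⟨c, hcpos, hcsum⟩ := stiemke hk a hhyp
    set s : ℝ := ∑ i, c i with hs
    have hspos : 0 < s := Finset.sum_pos (fun i _ => hcpos i) univ_nonempty
    refine ⟨fun i => c i / s, fun i => div_pos (hcpos i) hspos, ?_, ?_⟩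
    · rw [← Finset.sum_div, ← hs, div_self hspos.ne']
    · intro ω
      have hptw : (∑ i, c i * (ν i ω - μ ω)) = 0 := by
        have h1 : (∑ i, c i • (fun ω' => ν i ω' - μ ω') : Ω → ℝ) = 0 := by
          have h0 := congrArg WithLp.ofLp hcsum
          simpa [ha] using h0
        have h2 := congrFun h1 ω
        simpa [Finset.sum_apply] using h2
      have : (∑ i, c i * ν i ω) = s * μ ω := by
        simp only [mul_sub] at hptw
        rw [Finset.sum_sub_distrib, ← Finset.sum_mul, ← hs, sub_eq_zero] at hptw
        exact hptw
      show μ ω = ∑ i, c i / s * ν i ω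
      have h3 : ∑ i, c i / s * ν i ω = (∑ i, c i * ν i ω) / s := by
        rw [Finset.sum_div]
        exact Finset.sum_congr rfl fun i _ => by ring
      rw [h3, this, mul_comm, mul_div_assoc, div_self hspos.ne', mul_one]
  · -- easy direction
    rintro ⟨q, hqpos, hqsum, hq⟩ u hu0 hupos i
    have hkey : (∑ j, q j * ∑ ω, ν j ω * u ω) = 0 := by
      calc ∑ j, q j * ∑ ω, ν j ω * u ω
          = ∑ j, ∑ ω, q j * (ν j ω * u ω) := by simp [Finset.mul_sum]
        _ = ∑ ω, ∑ j, q j * (ν j ω * u ω) := Finset.sum_comm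
        _ = ∑ ω, μ ω * u ω := by
              refine Finset.sum_congr rfl fun ω _ => ?_
              rw [hq ω, Finset.sum_mul]
              exact Finset.sum_congr rfl fun j _ => by ring
        _ = 0 := hu0
    have hterm : ∀ j ∈ Finset.univ (α := Fin k), 0 ≤ q j * ∑ ω, ν j ω * u ω :=
      fun j _ => mul_nonneg (hqpos j).le (hupos j)
    have := (Finset.sum_eq_zero_iff_of_nonneg hterm).mp hkey i (mem_univ i)
    rcases mul_eq_zero.mp this with h | h
    · exact absurd h (hqpos i).ne'
    · exact h
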